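/- The generalized simple roots generate a free abelian subgroup of the group (ℂ(u)^×)^I: if n : I × ℂ → ℤ is finitely supported and ∏_{(i,a)} (A_{i,a})^{n(i,a)} = 1 componentwise in ℂ(u)^×, then n(i,a) = 0 for all (i,a) ∈ I × ℂ. -/

import Mathlib

open Polynomial

/-- The `j`-th component `(u − a + d_{ij})/(u − a − d_{ij})` of the generalized simple
root `A_{i,a}`, where `d_{ij} = d i * c i j / 2`. -/
noncomputable def genSimpleRoot {I : Type*} (c : I → I → ℤ) (d : I → ℤ)
    (i : I) (a : ℂ) (j : I) : RatFunc ℂ :=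
  algebraMap (Polynomial ℂ) (RatFunc ℂ) (X - C (a - ((d i * c i j : ℤ) : ℂ) / 2)) /
    algebraMap (Polynomial ℂ) (RatFunc ℂ) (X - C (a + ((d i * c i j : ℤ) : ℂ) / 2))

noncomputable section
abbrev R' : Type := AddMonoidAlgebra ℝ ℂ

noncomputable def Fm (k : ℤ) : R' := AddMonoidAlgebra.single ((k : ℂ)/2) 1

lemma Fm_mul (k l : ℤ) : Fm k * Fm l = Fm (k + l) := by
  rw [Fm, Fm, AddMonoidAlgebra.single_mul_single]
  congr 1
  · push_cast; ring
  · ring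

noncomputable def sgeo (b : ℕ) : R' := ∑ r ∈ Finset.range b, Fm ((b : ℤ) - 1 - 2*r)

lemma sgeo_succ (b : ℕ) : sgeo (b+1) = Fm 1 * sgeo b + Fm (-(b:ℤ)) := by
  rw [sgeo, sgeo, Finset.sum_range_succ, Finset.mul_sum]
  congr 1
  · exact Finset.sum_congr rfl fun r _ => by rw [Fm_mul]; congr 1; push_cast; ring
  · congr 1; push_cast; ring

lemma key_telescope (b : ℕ) : (Fm 1 - Fm (-1)) * sgeo b = Fm b - Fm (-(b:ℤ)) := by
  induction b with
  | zero => simp [sgeo]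
  | succ b ih =>
    rw [sgeo_succ, mul_add, mul_comm (Fm 1 - Fm (-1)) (Fm 1 * sgeo b), mul_assoc,
      mul_comm (sgeo b), ih]
    rw [mul_sub, sub_mul, Fm_mul, Fm_mul, Fm_mul]
    have e1 : (1:ℤ) + b = ((b+1 : ℕ) : ℤ) := by push_cast; ring
    have e2 : (-1 : ℤ) + -b = -((b+1 : ℕ) : ℤ) := by push_cast; ring
    rw [e1, e2]
    abel

/-- signed version -/
noncomputable def Sgeo (k : ℤ) : R' := if 0 ≤ k then sgeo k.toNat else - sgeo (-k).toNat

lemma key_telescope' (k : ℤ) : (Fm 1 - Fm (-1)) * Sgeo k = Fm k - Fm (-k) := by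
  rcases le_or_gt 0 k with hk | hk
  · rw [Sgeo, if_pos hk, key_telescope]
    congr <;> omega
  · rw [Sgeo, if_neg (by omega), mul_neg, key_telescope]
    have : ((-k).toNat : ℤ) = -k := by omega
    rw [this, neg_neg, neg_sub]

/-- augmentation -/
noncomputable def eps : AddMonoidAlgebra ℝ ℂ →ₐ[ℝ] ℝ :=
  AddMonoidAlgebra.lift ℝ ℝ ℂ 1

lemma eps_Fm (k : ℤ) : eps (Fm k) = 1 := by
  rw [eps, Fm, AddMonoidAlgebra.lift_single]
  simp

lemma eps_sgeo (b : ℕ) : eps (sgeo b) = b := by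
  rw [sgeo, map_sum]
  simp [eps_Fm]

lemma eps_Sgeo (k : ℤ) : eps (Sgeo k) = k := by
  rcases le_or_gt 0 k with hk | hk
  · rw [Sgeo, if_pos hk, eps_sgeo]
    exact_mod_cast Int.toNat_of_nonneg hk
  · rw [Sgeo, if_neg (by omega), map_neg, eps_sgeo]
    rw [show (((-k).toNat : ℕ) : ℝ) = ((((-k).toNat : ℤ)) : ℝ) by push_cast; ring,
      Int.toNat_of_nonneg (by omega)]
    push_cast; ring

lemma Fm_sub_ne : Fm 1 - Fm (-1) ≠ 0 := by
  intro hcon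
  have := congrArg (fun f : R' => f.coeff ((1:ℂ)/2)) hcon
  simp only [Fm] at this
  rw [AddMonoidAlgebra.coeff_sub, Finsupp.coe_sub] at this
  simp only [Pi.sub_apply, AddMonoidAlgebra.coeff_single, Finsupp.single_apply, AddMonoidAlgebra.coeff_zero] at this
  norm_num at this

noncomputable def Esing (a : ℂ) : R' := AddMonoidAlgebra.single a 1

lemma Esing_mul (a b : ℂ) : Esing a * Esing b = Esing (a + b) := by
  rw [Esing, Esing, AddMonoidAlgebra.single_mul_single, one_mul]; rfl

lemma Esing_Fm (k : ℤ) : Esing ((k : ℂ)/2) = Fm k := rfl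

section Mat
variable {I : Type*} [Fintype I] [DecidableEq I]

noncomputable def Mmat (c : I → I → ℤ) (d : I → ℤ) : Matrix I I R' :=
  Matrix.of fun j i => Fm (-(d i * c i j)) - Fm (d i * c i j)

set_option linter.unusedSectionVars false in
lemma Mmat_eq (c : I → I → ℤ) (d : I → ℤ) :
    Mmat c d = (Fm 1 - Fm (-1)) • Matrix.of fun j i => - Sgeo (d i * c i j) := by
  ext j i
  simp only [Mmat, Matrix.smul_apply, Matrix.of_apply, smul_eq_mul, mul_neg,
    key_telescope', neg_sub]

lemma det_Mmat_ne_zero (c : I → I → ℤ) (d : I → ℤ)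
    (hposdef : (Matrix.of fun i j => ((d i * c i j : ℤ) : ℝ)).PosDef) :
    (Mmat c d).det ≠ 0 := by
  rw [Mmat_eq, Matrix.det_smul]
  refine mul_ne_zero (pow_ne_zero _ Fm_sub_ne) (fun hdet => ?_)
  have h2 := congrArg eps.toRingHom hdet
  rw [RingHom.map_det, map_zero] at h2
  have hB : (eps.toRingHom.mapMatrix (Matrix.of fun j i => - Sgeo (d i * c i j)))
      = - (Matrix.of fun i j => ((d i * c i j : ℤ) : ℝ)).transpose := by
    ext j i
    simp [RingHom.mapMatrix_apply, Matrix.map_apply, eps_Sgeo]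
  rw [hB, Matrix.det_neg, Matrix.det_transpose] at h2
  have := hposdef.det_pos
  have hne : ((-1 : ℝ) ^ Fintype.card I) ≠ 0 := by
    simp
  rcases mul_eq_zero.mp h2 with h | h
  · exact hne h
  · exact (ne_of_gt this) h

end Mat

open Polynomial in
lemma relation_in_R {I : Type*} (c : I → I → ℤ) (d : I → ℤ) (n : (I × ℂ) →₀ ℤ) (j : I)
    (h : (∏ p ∈ n.support, genSimpleRoot c d p.1 p.2 j ^ n p) = 1) :
    ∑ p ∈ n.support, n p • (Esing (p.2 - ((d p.1 * c p.1 j : ℤ) : ℂ)/2)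
        - Esing (p.2 + ((d p.1 * c p.1 j : ℤ) : ℂ)/2)) = 0 := by
  classical
  set s := n.support with hs
  set A := algebraMap (Polynomial ℂ) (RatFunc ℂ) with hA
  set rm : I × ℂ → ℂ := fun p => p.2 - ((d p.1 * c p.1 j : ℤ) : ℂ)/2 with hrm
  set rp : I × ℂ → ℂ := fun p => p.2 + ((d p.1 * c p.1 j : ℤ) : ℂ)/2 with hrp
  set N : I × ℂ → Polynomial ℂ := fun p => X - C (rm p) with hN
  set D : I × ℂ → Polynomial ℂ := fun p => X - C (rp p) with hD
  have hNne : ∀ p, N p ≠ 0 := fun p => X_sub_C_ne_zero _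
  have hDne : ∀ p, D p ≠ 0 := fun p => X_sub_C_ne_zero _
  have hANne : ∀ p, A (N p) ≠ 0 := fun p => RatFunc.algebraMap_ne_zero (hNne p)
  have hADne : ∀ p, A (D p) ≠ 0 := fun p => RatFunc.algebraMap_ne_zero (hDne p)
  set ap : I × ℂ → ℕ := fun p => (n p).toNat with hap
  set bp : I × ℂ → ℕ := fun p => (-(n p)).toNat with hbp
  -- Step 1: per-factor identity
  have step1 : ∀ p, genSimpleRoot c d p.1 p.2 j ^ (n p) * (A (N p) ^ bp p * A (D p) ^ ap p)
      = A (N p) ^ ap p * A (D p) ^ bp p := by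
    intro p
    have hg : genSimpleRoot c d p.1 p.2 j = A (N p) / A (D p) := rfl
    rcases le_or_gt 0 (n p) with hnp | hnp
    · have hbp0 : bp p = 0 := by simp only [hbp]; omega
      have hnp' : n p = (ap p : ℤ) := by simp only [hap]; omega
      rw [hg, hnp', hbp0, zpow_natCast, pow_zero, pow_zero, div_pow, one_mul, mul_one,
        div_mul_cancel₀ _ (pow_ne_zero _ (hADne p))]
    · have hap0 : ap p = 0 := by simp only [hap]; omega
      have hnp' : n p = -(bp p : ℤ) := by simp only [hbp]; omega
      rw [hg, hnp', hap0, zpow_neg, zpow_natCast, div_pow, inv_div, pow_zero, pow_zero,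
        mul_one, one_mul, div_mul_cancel₀ _ (pow_ne_zero _ (hANne p))]
  -- Step 2: clear denominators in the product relation
  have step2 : ∏ p ∈ s, (A (N p) ^ ap p * A (D p) ^ bp p)
      = ∏ p ∈ s, (A (N p) ^ bp p * A (D p) ^ ap p) := by
    calc ∏ p ∈ s, (A (N p) ^ ap p * A (D p) ^ bp p)
        = ∏ p ∈ s, (genSimpleRoot c d p.1 p.2 j ^ (n p) * (A (N p) ^ bp p * A (D p) ^ ap p)) :=
          Finset.prod_congr rfl (fun p _ => (step1 p).symm)
      _ = (∏ p ∈ s, genSimpleRoot c d p.1 p.2 j ^ (n p)) * ∏ p ∈ s, (A (N p) ^ bp p * A (D p) ^ ap p) :=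
          Finset.prod_mul_distrib
      _ = ∏ p ∈ s, (A (N p) ^ bp p * A (D p) ^ ap p) := by rw [h, one_mul]
  -- Step 3: equality of polynomials
  have step3 : ∏ p ∈ s, (N p ^ ap p * D p ^ bp p) = ∏ p ∈ s, (N p ^ bp p * D p ^ ap p) := by
    apply IsFractionRing.injective (Polynomial ℂ) (RatFunc ℂ)
    rw [map_prod, map_prod]
    simpa only [map_mul, map_pow] using step2
  -- Step 4: equality of root multisets
  have roots_eq : ∀ (e1 e2 : (I × ℂ) → ℕ),
      (∏ p ∈ s, (N p ^ e1 p * D p ^ e2 p)).roots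
        = s.val.bind (fun p => e1 p • {rm p} + e2 p • {rp p}) := by
    intro e1 e2
    rw [Polynomial.roots_prod _ _ (Finset.prod_ne_zero_iff.mpr
      (fun p _ => mul_ne_zero (pow_ne_zero _ (hNne p)) (pow_ne_zero _ (hDne p))))]
    congr 1
    funext p
    rw [Polynomial.roots_mul (mul_ne_zero (pow_ne_zero _ (hNne p)) (pow_ne_zero _ (hDne p))),
      Polynomial.roots_pow, Polynomial.roots_pow, hN, hD,
      Polynomial.roots_X_sub_C, Polynomial.roots_X_sub_C]
  -- Step 5: push to the group algebra
  have sum_eq : ∀ (e1 e2 : (I × ℂ) → ℕ),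
      (((s.val.bind (fun p => e1 p • {rm p} + e2 p • {rp p})).map Esing)).sum
        = ∑ p ∈ s, (e1 p • Esing (rm p) + e2 p • Esing (rp p)) := by
    intro e1 e2
    rw [Multiset.map_bind, Multiset.sum_bind, Finset.sum_eq_multiset_sum]
    apply congrArg Multiset.sum
    apply Multiset.map_congr rfl
    intro p _
    simp [Multiset.map_nsmul, Multiset.sum_nsmul]
  have step5 : ∑ p ∈ s, (ap p • Esing (rm p) + bp p • Esing (rp p))
      = ∑ p ∈ s, (bp p • Esing (rm p) + ap p • Esing (rp p)) := by
    rw [← sum_eq, ← sum_eq, ← roots_eq, ← roots_eq, step3]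
  -- Step 6: conclude
  have : ∑ p ∈ s, (((ap p : ℤ) - bp p) • (Esing (rm p) - Esing (rp p))) = 0 := by
    have expand : ∀ p, ((ap p : ℤ) - bp p) • (Esing (rm p) - Esing (rp p))
        = (ap p • Esing (rm p) + bp p • Esing (rp p))
          - (bp p • Esing (rm p) + ap p • Esing (rp p)) := by
      intro p
      rw [sub_zsmul, zsmul_sub, zsmul_sub, natCast_zsmul, natCast_zsmul, natCast_zsmul,
        natCast_zsmul]
      abel
    rw [Finset.sum_congr rfl (fun p _ => expand p), Finset.sum_sub_distrib, step5, sub_self]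
  calc ∑ p ∈ s, n p • (Esing (rm p) - Esing (rp p))
      = ∑ p ∈ s, (((ap p : ℤ) - bp p) • (Esing (rm p) - Esing (rp p))) :=
        Finset.sum_congr rfl (fun p _ => by rw [hap, hbp, Int.toNat_sub_toNat_neg])
    _ = 0 := this


/-- The generalized simple roots `A_{i,a}` generate a free abelian subgroup of
`(ℂ(u)^×)^I`: any finitely supported integral relation among them is trivial. -/
theorem genSimpleRoot_free {I : Type*} [Fintype I] [DecidableEq I]
    (c : I → I → ℤ) (d : I → ℤ)
    (hcdiag : ∀ i, c i i = 2)
    (hcoff : ∀ i j, i ≠ j → c i j ≤ 0)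
    (hczero : ∀ i j, c i j = 0 ↔ c j i = 0)
    (hd : ∀ i, 0 < d i)
    (hsym : ∀ i j, d i * c i j = d j * c j i)
    (hposdef : (Matrix.of fun i j => ((d i * c i j : ℤ) : ℝ)).PosDef)
    (n : (I × ℂ) →₀ ℤ)
    (h : ∀ j : I, (∏ p ∈ n.support, genSimpleRoot c d p.1 p.2 j ^ n p) = 1) :
    n = 0 := by
  classical
  haveI : IsDomain R' := NoZeroDivisors.to_isDomain _
  set P : I → R' := fun i => ∑ p ∈ n.support.filter (fun p => p.1 = i), n p • Esing p.2 with hP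
  have hrel : (Mmat c d).mulVec P = 0 := by
    funext j
    have h0 := relation_in_R c d n j (h j)
    have hterm : ∀ p : I × ℂ,
        Esing (p.2 - ((d p.1 * c p.1 j : ℤ) : ℂ)/2) - Esing (p.2 + ((d p.1 * c p.1 j : ℤ) : ℂ)/2)
          = Esing p.2 * Mmat c d j p.1 := by
      intro p
      have e1 : p.2 - ((d p.1 * c p.1 j : ℤ) : ℂ)/2 = p.2 + ((-(d p.1 * c p.1 j) : ℤ) : ℂ)/2 := by
        push_cast; ring
      rw [Mmat, Matrix.of_apply, mul_sub, ← Esing_Fm, ← Esing_Fm, Esing_mul, Esing_mul, e1]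
    rw [Finset.sum_congr rfl (fun p _ => by rw [hterm p])] at h0
    have h1 : ∑ i : I, ∑ p ∈ n.support.filter (fun p => p.1 = i),
        n p • (Esing p.2 * Mmat c d j p.1) = 0 := by
      rw [Finset.sum_fiberwise n.support (fun p => p.1) (fun p => n p • (Esing p.2 * Mmat c d j p.1))]
      exact h0
    have h2 : ∀ i : I, ∑ p ∈ n.support.filter (fun p => p.1 = i),
        n p • (Esing p.2 * Mmat c d j p.1) = P i * Mmat c d j i := by
      intro i
      rw [hP, Finset.sum_mul]
      apply Finset.sum_congr rfl
      intro p hp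
      have : p.1 = i := (Finset.mem_filter.mp hp).2
      rw [this, smul_mul_assoc]
    show ∑ i : I, Mmat c d j i * P i = 0
    rw [Finset.sum_congr rfl (fun i _ => mul_comm (Mmat c d j i) (P i)),
      ← Finset.sum_congr rfl (fun i (_ : i ∈ Finset.univ) => h2 i)]
    exact h1
  have hP0 : P = 0 := Matrix.eq_zero_of_mulVec_eq_zero (det_Mmat_ne_zero c d hposdef) hrel
  ext q
  by_cases hq : q ∈ n.support
  swap
  · simpa using Finsupp.notMem_support_iff.mp hq
  have hPi : P q.1 = 0 := congrFun hP0 q.1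
  have := congrArg (fun f : R' => f.coeff q.2) hPi
  simp only [hP] at this
  rw [AddMonoidAlgebra.coeff_sum, Finsupp.finset_sum_apply] at this
  have hval : ∑ p ∈ n.support.filter (fun p => p.1 = q.1),
      (n p • Esing p.2 : R').coeff q.2 = (n q : ℝ) := by
    have hzero : ∀ p ∈ n.support.filter (fun p => p.1 = q.1), p ≠ q →
        (n p • Esing p.2 : R').coeff q.2 = 0 := by
      intro p hp hpq
      have h1 : p.1 = q.1 := (Finset.mem_filter.mp hp).2
      have h2 : p.2 ≠ q.2 := fun h2 => hpq (Prod.ext h1 h2)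
      rw [AddMonoidAlgebra.coeff_smul, Finsupp.smul_apply]
      have e0 : (Esing p.2).coeff q.2 = 0 := Finsupp.single_eq_of_ne h2.symm
      rw [e0]
      simp
    have hqval : (n q • Esing q.2 : R').coeff q.2 = (n q : ℝ) := by
      rw [AddMonoidAlgebra.coeff_smul, Finsupp.smul_apply]
      have e1 : (Esing q.2).coeff q.2 = 1 := Finsupp.single_eq_same
      rw [e1]
      simp
    have hqmem : q ∈ n.support.filter (fun p => p.1 = q.1) := Finset.mem_filter.mpr ⟨hq, rfl⟩
    exact (Finset.sum_eq_single_of_mem q hqmem hzero).trans hqval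
  rw [hval] at this
  simp only [AddMonoidAlgebra.coeff_zero, Finsupp.coe_zero, Pi.zero_apply] at this ⊢
  exact_mod_cast this
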